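/- Let K be an algebraically closed field, and let f, g, r ∈ K[x,y] and m ∈ K[x] nonzero, with m·f = q·g + r for some q ∈ K[x,y], wheref, g are coprime and the systems (f,g), (m,g), (g,r) are all zero-dimensional. Then for every point p ∈ V(f,g), the intersection multiplicity of p in (f,g) equals the intersection multiplicity of p in (g,r) minus the intersection multiplicity of p in (m,g) (where multiplicity at a point not in a variety is 0). -/

import Mathlib

open MvPolynomial

/-- The intersection multiplicity of the pair `(a, b)` of bivariate polynomials at the
point `pt`: the `K`-dimension of the localization of `K[x,y]/(a,b)` at the maximal ideal
of `pt` (it is `0` when `pt` is not a common zero). -/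
noncomputable def interMult {K : Type*} [Field K] (pt : Fin 2 → K)
    (a b : MvPolynomial (Fin 2) K) : ℕ :=
  have hm : (RingHom.ker (MvPolynomial.eval pt : MvPolynomial (Fin 2) K →+* K)).IsMaximal :=
    RingHom.ker_isMaximal_of_surjective _ (fun k => ⟨MvPolynomial.C k, by simp⟩)
  have : (RingHom.ker (MvPolynomial.eval pt : MvPolynomial (Fin 2) K →+* K)).IsPrime :=
    hm.isPrime
  let L := Localization.AtPrime (RingHom.ker (MvPolynomial.eval pt : MvPolynomial (Fin 2) K →+* K))
  Module.finrank K
    (L ⧸ Ideal.span {algebraMap (MvPolynomial (Fin 2) K) L a, algebraMap (MvPolynomial (Fin 2) K) L b})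

/-- Embedding of `K[x]` into `K[x,y]`, sending `x` to the first variable. -/
noncomputable def embX {K : Type*} [Field K] (m : Polynomial K) : MvPolynomial (Fin 2) K :=
  Polynomial.aeval (X 0 : MvPolynomial (Fin 2) K) m

set_option maxHeartbeats 1000000
set_option synthInstance.maxHeartbeats 400000

theorem finrank_quot_mul_add {K B : Type*} [Field K] [CommRing B] [Algebra K B]
    (g f m : B)
    (H : ∀ x : B, f * x ∈ Ideal.span {g, m * f} → x ∈ Ideal.span {g, m})
    (hfd : FiniteDimensional K (B ⧸ Ideal.span {g, m * f})) :
    Module.finrank K (B ⧸ Ideal.span {g, m * f}) =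
      Module.finrank K (B ⧸ Ideal.span {g, m}) + Module.finrank K (B ⧸ Ideal.span {g, f}) := by
  set J : Ideal B := Ideal.span {g, m * f} with hJ
  set I₁ : Ideal B := Ideal.span {g, m} with hI₁
  set I₂ : Ideal B := Ideal.span {g, f} with hI₂
  have h₁ : I₁ ≤ Submodule.comap (LinearMap.lsmul B B f) J := by
    intro x hx
    obtain ⟨c, d, rfl⟩ := Ideal.mem_span_pair.mp hx
    refine Submodule.mem_comap.mpr ?_
    show f • (c * g + d * m) ∈ J
    rw [smul_eq_mul]
    exact Ideal.mem_span_pair.mpr ⟨f * c, d, by ring⟩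
  have h₂ : J ≤ Submodule.comap (LinearMap.id : B →ₗ[B] B) I₂ := by
    intro x hx
    obtain ⟨c, d, rfl⟩ := Ideal.mem_span_pair.mp hx
    exact Ideal.mem_span_pair.mpr ⟨c, d * m, by ring⟩
  set φ : (B ⧸ I₁) →ₗ[B] (B ⧸ J) := Submodule.mapQ I₁ J (LinearMap.lsmul B B f) h₁ with hφ
  set ψ : (B ⧸ J) →ₗ[B] (B ⧸ I₂) := Submodule.mapQ J I₂ LinearMap.id h₂ with hψ
  set φK := φ.restrictScalars K with hφK
  set ψK := ψ.restrictScalars K with hψK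
  have hφ_apply : ∀ x : B, φK (Ideal.Quotient.mk I₁ x) = Ideal.Quotient.mk J (f * x) :=
    fun x => rfl
  have hψ_apply : ∀ x : B, ψK (Ideal.Quotient.mk J x) = Ideal.Quotient.mk I₂ x :=
    fun x => rfl
  have hinj : Function.Injective φK := by
    rw [← LinearMap.ker_eq_bot, eq_bot_iff]
    rintro z hz
    obtain ⟨x, rfl⟩ := Ideal.Quotient.mk_surjective z
    rw [LinearMap.mem_ker, hφ_apply, Ideal.Quotient.eq_zero_iff_mem] at hz
    simpa [Submodule.mem_bot, Ideal.Quotient.eq_zero_iff_mem] using H x hz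
  have hsurj : Function.Surjective ψK := by
    intro z
    obtain ⟨x, rfl⟩ := Ideal.Quotient.mk_surjective z
    exact ⟨Ideal.Quotient.mk J x, hψ_apply x⟩
  have hker : LinearMap.ker ψK = LinearMap.range φK := by
    ext z
    constructor
    · intro hz
      obtain ⟨x, rfl⟩ := Ideal.Quotient.mk_surjective z
      rw [LinearMap.mem_ker, hψ_apply, Ideal.Quotient.eq_zero_iff_mem] at hz
      obtain ⟨c, d, hcd⟩ := Ideal.mem_span_pair.mp hz
      refine ⟨Ideal.Quotient.mk I₁ d, ?_⟩
      rw [hφ_apply, Ideal.Quotient.mk_eq_mk_iff_sub_mem]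
      have he : f * d - x = (-c) * g + 0 * (m * f) := by rw [← hcd]; ring
      rw [he]
      exact Ideal.mem_span_pair.mpr ⟨-c, 0, rfl⟩
    · rintro ⟨w, rfl⟩
      obtain ⟨d, rfl⟩ := Ideal.Quotient.mk_surjective w
      rw [LinearMap.mem_ker, hφ_apply, hψ_apply, Ideal.Quotient.eq_zero_iff_mem]
      exact Ideal.mem_span_pair.mpr ⟨0, d, by ring⟩
  haveI := hfd
  have e1 : (B ⧸ I₁) ≃ₗ[K] (LinearMap.ker ψK : Submodule K (B ⧸ J)) :=
    (LinearEquiv.ofInjective φK hinj).trans (LinearEquiv.ofEq _ _ hker.symm)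
  have e2 : ((B ⧸ J) ⧸ (LinearMap.ker ψK)) ≃ₗ[K] (B ⧸ I₂) :=
    ψK.quotKerEquivOfSurjective hsurj
  have h3 := Submodule.finrank_quotient_add_finrank (LinearMap.ker ψK)
  rw [e2.finrank_eq, ← e1.finrank_eq] at h3
  omega


theorem mem_of_mul_unit_mem {K B : Type*} [Field K] [CommRing B] [Algebra K B]
    (A : Subalgebra K B) (hfd : FiniteDimensional K A) {σ z : B}
    (hσ : σ ∈ A) (hu : IsUnit σ) (h : z * σ ∈ A) : z ∈ A := by
  haveI := hfd
  set σ' : A := ⟨σ, hσ⟩ with hσ'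
  have hinj : Function.Injective (LinearMap.mulLeft K σ') := by
    intro x y hxy
    have : σ * (x : B) = σ * (y : B) := by
      have := congrArg (Subtype.val) hxy
      simpa [LinearMap.mulLeft_apply] using this
    exact Subtype.ext (hu.mul_left_cancel this)
  obtain ⟨w, hw⟩ := LinearMap.surjective_of_injective hinj ⟨z * σ, h⟩
  have hww : σ * (w : B) = z * σ := by
    have := congrArg (Subtype.val) hw
    simpa [LinearMap.mulLeft_apply] using this
  have : (w : B) = z := hu.mul_left_cancel (by rw [hww]; ring)
  rw [← this]; exact w.2

theorem finite_quotient_localization {K R : Type*} [Field K] [CommRing R] [Algebra K R]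
    (P : Ideal R) [P.IsPrime] (I₀ : Ideal R)
    (hfd : Module.Finite K (R ⧸ I₀)) :
    Module.Finite K
      (Localization.AtPrime P ⧸ I₀.map (algebraMap R (Localization.AtPrime P))) := by
  set L := Localization.AtPrime P with hL
  set Iₗ : Ideal L := I₀.map (algebraMap R L) with hIₗ
  set φ : R →ₐ[K] L ⧸ Iₗ := (Ideal.Quotient.mkₐ K Iₗ).comp (IsScalarTower.toAlgHom K R L) with hφ
  have hker : ∀ x ∈ I₀, φ x = 0 := by
    intro x hx
    have h2 : algebraMap R L x ∈ Iₗ := Ideal.mem_map_of_mem _ hx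
    show Ideal.Quotient.mk Iₗ (algebraMap R L x) = 0
    exact Ideal.Quotient.eq_zero_iff_mem.mpr h2
  set ψ : (R ⧸ I₀) →ₐ[K] L ⧸ Iₗ := Ideal.Quotient.liftₐ I₀ φ hker with hψ
  have hψ_apply : ∀ x : R, ψ (Ideal.Quotient.mk I₀ x) = φ x := fun x =>
    Ideal.Quotient.liftₐ_apply I₀ φ hker _ |>.trans (Ideal.Quotient.lift_mk I₀ _ _)
  haveI : FiniteDimensional K (R ⧸ I₀) := hfd
  haveI hArange : FiniteDimensional K ψ.range :=
    Module.Finite.of_surjective (ψ.rangeRestrict).toLinearMap (AlgHom.rangeRestrict_surjective ψ)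
  have hAtop : ∀ z : L ⧸ Iₗ, z ∈ ψ.range := by
    intro z
    obtain ⟨l, rfl⟩ := Ideal.Quotient.mk_surjective z
    obtain ⟨⟨x₀, s⟩, hs⟩ := IsLocalization.surj (M := P.primeCompl) l
    have hσmem : Ideal.Quotient.mk Iₗ (algebraMap R L s) ∈ ψ.range := by
      refine ⟨Ideal.Quotient.mk I₀ s, ?_⟩
      show ψ (Ideal.Quotient.mk I₀ (s : R)) = _
      rw [hψ_apply]; rfl
    have hu : IsUnit (Ideal.Quotient.mk Iₗ (algebraMap R L s)) :=
      (IsLocalization.map_units L s).map (Ideal.Quotient.mk Iₗ)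
    have hz : Ideal.Quotient.mk Iₗ l * Ideal.Quotient.mk Iₗ (algebraMap R L s) ∈ ψ.range := by
      rw [← map_mul, hs]
      refine ⟨Ideal.Quotient.mk I₀ x₀, ?_⟩
      show ψ (Ideal.Quotient.mk I₀ x₀) = _
      rw [hψ_apply]; rfl
    exact mem_of_mul_unit_mem ψ.range hArange hσmem hu hz
  have hsurj : Function.Surjective ψ := fun z => hAtop z
  exact Module.Finite.of_surjective ψ.toLinearMap hsurj

theorem eval_aeval_X {K : Type*} [Field K] (c : Polynomial K) (i : Fin 2) (x : Fin 2 → K) :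
    eval x (Polynomial.aeval (X i : MvPolynomial (Fin 2) K) c) = Polynomial.eval (x i) c := by
  rw [Polynomial.aeval_def, Polynomial.hom_eval₂]
  have h1 : (eval x : MvPolynomial (Fin 2) K →+* K).comp
      (algebraMap K (MvPolynomial (Fin 2) K)) = RingHom.id K := by
    ext c
    simp [MvPolynomial.algebraMap_eq]
  rw [h1, eval_X]
  rfl

theorem finite_of_univariates {K : Type*} [Field K] (I : Ideal (MvPolynomial (Fin 2) K))
    (a b : Polynomial K) (ha : a.Monic) (hb : b.Monic)
    (hA : Polynomial.aeval (X 0 : MvPolynomial (Fin 2) K) a ∈ I)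
    (hB : Polynomial.aeval (X 1 : MvPolynomial (Fin 2) K) b ∈ I) :
    Module.Finite K (MvPolynomial (Fin 2) K ⧸ I) := by
  set R := MvPolynomial (Fin 2) K
  set Q := R ⧸ I
  set x0 : Q := Ideal.Quotient.mk I (X 0) with hx0
  set x1 : Q := Ideal.Quotient.mk I (X 1) with hx1
  have hi0 : IsIntegral K x0 := by
    refine ⟨a, ha, ?_⟩
    rw [← Polynomial.aeval_def, hx0, ← Ideal.Quotient.mkₐ_eq_mk K I,
      Polynomial.aeval_algHom_apply, Ideal.Quotient.mkₐ_eq_mk]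
    exact Ideal.Quotient.eq_zero_iff_mem.mpr hA
  have hi1 : IsIntegral K x1 := by
    refine ⟨b, hb, ?_⟩
    rw [← Polynomial.aeval_def, hx1, ← Ideal.Quotient.mkₐ_eq_mk K I,
      Polynomial.aeval_algHom_apply, Ideal.Quotient.mkₐ_eq_mk]
    exact Ideal.Quotient.eq_zero_iff_mem.mpr hB
  have hadj : Algebra.adjoin K ({x0, x1} : Set Q) = ⊤ := by
    rw [eq_top_iff]
    rintro z -
    obtain ⟨w, rfl⟩ := Ideal.Quotient.mk_surjective z
    induction w using MvPolynomial.induction_on with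
    | C c =>
      have : Ideal.Quotient.mk I (C c) = algebraMap K Q c := rfl
      rw [this]
      exact Subalgebra.algebraMap_mem _ c
    | add p q hp hq => rw [map_add]; exact add_mem hp hq
    | mul_X p i hp =>
      rw [map_mul]
      refine mul_mem hp ?_
      fin_cases i
      · exact Algebra.subset_adjoin (Set.mem_insert _ _)
      · exact Algebra.subset_adjoin (Set.mem_insert_of_mem _ rfl)
  have hfg : (Algebra.adjoin K ({x0, x1} : Set Q)).toSubmodule.FG := by
    refine fg_adjoin_of_finite (Set.toFinite _) ?_
    rintro x (rfl | rfl)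
    · exact hi0
    · exact hi1
  rw [Module.finite_def, ← Algebra.top_toSubmodule, ← hadj]
  exact hfg

theorem finite_of_zeroLocus_finite {K : Type*} [Field K] [IsAlgClosed K]
    (I : Ideal (MvPolynomial (Fin 2) K)) (hfin : (zeroLocus K I).Finite) :
    Module.Finite K (MvPolynomial (Fin 2) K ⧸ I) := by
  have key : ∀ i : Fin 2, ∃ c : Polynomial K, c.Monic ∧
      Polynomial.aeval (X i : MvPolynomial (Fin 2) K) c ∈ I := by
    intro i
    set a : Polynomial K := ∏ q ∈ hfin.toFinset, (Polynomial.X - Polynomial.C (q i)) with hadef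
    have hmon : a.Monic :=
      Polynomial.monic_prod_of_monic _ _ (fun q _ => Polynomial.monic_X_sub_C _)
    have hvan : Polynomial.aeval (X i : MvPolynomial (Fin 2) K) a ∈
        vanishingIdeal K (zeroLocus K I) := by
      rw [mem_vanishingIdeal_iff]
      intro x hx
      rw [MvPolynomial.aeval_eq_eval, eval_aeval_X, hadef]
      rw [Polynomial.eval_prod]
      refine Finset.prod_eq_zero (hfin.mem_toFinset.mpr hx) ?_
      simp
    rw [vanishingIdeal_zeroLocus_eq_radical] at hvan
    obtain ⟨n, hn⟩ := Ideal.mem_radical_iff.mp hvan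
    exact ⟨a ^ n, hmon.pow n, by rwa [map_pow]⟩
  obtain ⟨a, ha, hA⟩ := key 0
  obtain ⟨b, hb, hB⟩ := key 1
  exact finite_of_univariates I a b ha hb hA hB

/-- One normalized pseudo-division step preserves multiplicities:
if `m·f = q·g + r` with `m ∈ K[x]` nonzero, `f, g` coprime, and `(f,g)`, `(m,g)`, `(g,r)`
zero-dimensional, then for every `p ∈ V(f,g)`,
`M_p(f,g) = M_p(g,r) − M_p(m,g)`. -/
theorem multiplicity_pseudo_division_step {K : Type*} [Field K] [IsAlgClosed K]
    (m : Polynomial K) (hm : m ≠ 0) (f g q r : MvPolynomial (Fin 2) K)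
    (heq : embX m * f = q * g + r)
    (hcop : IsRelPrime f g)
    (hfin1 : {p : Fin 2 → K | eval p f = 0 ∧ eval p g = 0}.Finite)
    (hfin2 : {p : Fin 2 → K | eval p (embX m) = 0 ∧ eval p g = 0}.Finite)
    (hfin3 : {p : Fin 2 → K | eval p g = 0 ∧ eval p r = 0}.Finite) :
    ∀ p : Fin 2 → K, eval p f = 0 → eval p g = 0 →
      (interMult p f g : ℤ) = (interMult p g r : ℤ) - (interMult p (embX m) g : ℤ) := by
  intro p hpf hpg
  have hmax : (RingHom.ker (MvPolynomial.eval p : MvPolynomial (Fin 2) K →+* K)).IsMaximal :=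
    RingHom.ker_isMaximal_of_surjective _ (fun k => ⟨MvPolynomial.C k, by simp⟩)
  haveI := hmax.isPrime
  set P : Ideal (MvPolynomial (Fin 2) K) :=
    RingHom.ker (MvPolynomial.eval p : MvPolynomial (Fin 2) K →+* K) with hPdef
  set L := Localization.AtPrime P with hLdef
  set am : MvPolynomial (Fin 2) K →+* L := algebraMap (MvPolynomial (Fin 2) K) L with ham
  have him1 : interMult p f g = Module.finrank K (L ⧸ Ideal.span {am f, am g}) := rfl
  have him2 : interMult p g r = Module.finrank K (L ⧸ Ideal.span {am g, am r}) := rfl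
  have him3 : interMult p (embX m) g =
      Module.finrank K (L ⧸ Ideal.span {am (embX m), am g}) := rfl
  have hle : P.primeCompl ≤ nonZeroDivisors (MvPolynomial (Fin 2) K) := fun x hx =>
    mem_nonZeroDivisors_of_ne_zero (fun h => hx (h ▸ P.zero_mem))
  have hinj : Function.Injective am := IsLocalization.injective L hle
  -- the division condition
  have H : ∀ x : L, am f * x ∈ Ideal.span {am g, am (embX m) * am f} →
      x ∈ Ideal.span {am g, am (embX m)} := by
    intro x hx
    obtain ⟨c, d, hcd⟩ := Ideal.mem_span_pair.mp hx
    obtain ⟨⟨x₀, s⟩, hxs⟩ := IsLocalization.surj (M := P.primeCompl) x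
    obtain ⟨⟨c₀, t⟩, hct⟩ := IsLocalization.surj (M := P.primeCompl) c
    obtain ⟨⟨d₀, u⟩, hdu⟩ := IsLocalization.surj (M := P.primeCompl) d
    simp only at hxs hct hdu
    rw [← ham] at hxs hct hdu
    have hR : f * (x₀ * (t * u)) = c₀ * g * (s * u) + d₀ * (embX m * f) * (s * t) := by
      apply hinj
      simp only [map_mul, map_add]
      simp only [← hxs, ← hct, ← hdu]
      linear_combination (-(am s * am t * am u)) * hcd
    have hdvd : g ∣ f * (x₀ * (t * u) - embX m * (d₀ * (s * t))) :=
      ⟨c₀ * (s * u), by linear_combination hR⟩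
    obtain ⟨e, he⟩ := (hcop.symm).dvd_of_dvd_mul_left hdvd
    have hkey : (x₀ * (t * u) : MvPolynomial (Fin 2) K)
        = embX m * (d₀ * (s * t)) + g * e := by linear_combination he
    have hvx : x * am ((s : MvPolynomial (Fin 2) K) * t * u) =
        am (embX m) * am (d₀ * (s * t)) + am g * am e := by
      have hL2 := congrArg am hkey
      simp only [map_mul, map_add] at hL2 ⊢
      simp only [← hxs] at hL2
      linear_combination hL2
    obtain ⟨v, hv⟩ := IsLocalization.map_units (M := P.primeCompl) L
      ⟨((s : MvPolynomial (Fin 2) K)) * t * u, mul_mem (mul_mem s.2 t.2) u.2⟩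
    rw [← ham] at hv
    refine Ideal.mem_span_pair.mpr
      ⟨am e * ↑v⁻¹, am (d₀ * (s * t)) * ↑v⁻¹, ?_⟩
    have hxv : x * ↑v = am (embX m) * am (d₀ * (s * t)) + am g * am e := by
      rw [hv]; exact hvx
    calc am e * ↑v⁻¹ * am g + am (d₀ * (s * t)) * ↑v⁻¹ * am (embX m)
        = (am (embX m) * am (d₀ * (s * t)) + am g * am e) * ↑v⁻¹ := by ring
      _ = (x * ↑v) * ↑v⁻¹ := by rw [hxv]
      _ = x := by rw [mul_assoc, Units.mul_inv, mul_one]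
  -- finite-dimensionality
  set I₀ : Ideal (MvPolynomial (Fin 2) K) := Ideal.span {g, embX m * f} with hI₀
  have hzl : (zeroLocus K I₀).Finite := by
    refine hfin3.subset ?_
    intro x hx
    have hxg : eval x g = 0 := hx g (Ideal.subset_span (Set.mem_insert _ _))
    have hxmf : eval x (embX m * f) = 0 :=
      hx _ (Ideal.subset_span (Set.mem_insert_of_mem _ rfl))
    refine ⟨hxg, ?_⟩
    have h5 := congrArg (eval x) heq
    simp only [map_mul, map_add, hxg, mul_zero, zero_add] at h5
    rw [← h5]
    simpa [map_mul] using hxmf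
  haveI h1 : Module.Finite K (MvPolynomial (Fin 2) K ⧸ I₀) :=
    finite_of_zeroLocus_finite I₀ hzl
  have hmap : Ideal.map (algebraMap (MvPolynomial (Fin 2) K) (Localization.AtPrime P)) I₀ =
      Ideal.span {algebraMap (MvPolynomial (Fin 2) K) (Localization.AtPrime P) g,
        algebraMap (MvPolynomial (Fin 2) K) (Localization.AtPrime P) (embX m) *
          algebraMap (MvPolynomial (Fin 2) K) (Localization.AtPrime P) f} := by
    rw [hI₀, Ideal.map_span, Set.image_insert_eq, Set.image_singleton, map_mul]
  have h2 : Module.Finite K (L ⧸ Ideal.span {am g, am (embX m) * am f}) := by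
    have h2' := finite_quotient_localization P I₀ h1
    rwa [hmap] at h2'
  have hadd := finrank_quot_mul_add (am g) (am f) (am (embX m)) H h2
  -- span rewrites
  have hpair1 : ({am f, am g} : Set L) = {am g, am f} := Set.pair_comm _ _
  have hpair3 : ({am (embX m), am g} : Set L) = {am g, am (embX m)} := Set.pair_comm _ _
  have hLr : am (embX m) * am f = am q * am g + am r := by
    have h6 := congrArg am heq
    simpa only [map_mul, map_add] using h6
  have hrspan : Ideal.span ({am g, am r} : Set L)
      = Ideal.span {am g, am (embX m) * am f} := by
    apply le_antisymm
    · apply Ideal.span_le.mpr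
      intro x hx
      simp only [Set.mem_insert_iff, Set.mem_singleton_iff] at hx
      rcases hx with rfl | rfl
      · exact Ideal.subset_span (Set.mem_insert _ _)
      · exact Ideal.mem_span_pair.mpr ⟨-(am q), 1, by linear_combination hLr⟩
    · apply Ideal.span_le.mpr
      intro x hx
      simp only [Set.mem_insert_iff, Set.mem_singleton_iff] at hx
      rcases hx with rfl | rfl
      · exact Ideal.subset_span (Set.mem_insert _ _)
      · exact Ideal.mem_span_pair.mpr ⟨am q, 1, by linear_combination -hLr⟩
  rw [him1, him2, him3, hpair1, hpair3, hrspan, hadd]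
  push_cast
  ring
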